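/- Let a, b be real numbers with 0 < a < b < 1. Then the function t ↦ (1 − a^{t+1})/(1 − b^t) is strictly decreasing on (0, ∞): for all 0 < t₁ < t₂, (1 − a^{t₁+1})/(1 − b^{t₁}) > (1 − a^{t₂+1})/(1 − b^{t₂}). -/

import Mathlib

open Real Set

/-- Tangent line inequality for `x ^ r` at `x = 1` (strict Bernoulli form). -/
lemma bern_aux {x r : ℝ} (hx : 0 < x) (hx1 : x < 1) (hr : 1 < r) :
    x ^ r + r * x ^ (r - 1) * (1 - x) < 1 := by
  have hs : (0:ℝ) < 1 / x - 1 := by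
    have : 1 < 1 / x := (one_lt_div hx).mpr hx1
    linarith
  have hB := one_add_mul_self_lt_rpow_one_add (s := 1 / x - 1) (by linarith) hs.ne' hr
  have h1 : (1 : ℝ) + (1 / x - 1) = 1 / x := by ring
  rw [h1] at hB
  have hxr : (0:ℝ) < x ^ r := rpow_pos_of_pos hx r
  have h2 : (1 / x) ^ r = (x ^ r)⁻¹ := by
    rw [one_div, Real.inv_rpow hx.le]
  rw [h2] at hB
  have hmul := mul_lt_mul_of_pos_right hB hxr
  have h3 : (x ^ r)⁻¹ * x ^ r = 1 := inv_mul_cancel₀ hxr.ne'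
  have h4 : x ^ (r - 1) = x ^ r / x := by
    rw [Real.rpow_sub hx, Real.rpow_one]
  rw [h3] at hmul
  rw [h4]
  have : (1 + r * (1 / x - 1)) * x ^ r = x ^ r + r * (x ^ r / x) * (1 - x) := by
    field_simp
  linarith [this ▸ hmul]

/-- `x ↦ (1 - x ^ r) / (1 - x)` is strictly monotone on `(0,1)` when `1 < r`. -/
lemma psi_strictMono {r : ℝ} (hr : 1 < r) :
    StrictMonoOn (fun x : ℝ => (1 - x ^ r) / (1 - x)) (Ioo (0:ℝ) 1) := by
  apply strictMonoOn_of_deriv_pos (convex_Ioo 0 1)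
  · apply ContinuousOn.div
    · exact continuousOn_const.sub (fun x hx =>
        ((Real.continuousAt_rpow_const x r (Or.inl hx.1.ne')).continuousWithinAt))
    · exact continuousOn_const.sub continuousOn_id
    · intro x hx
      exact sub_ne_zero.mpr hx.2.ne'
  · intro x hx
    rw [interior_Ioo] at hx
    obtain ⟨hx0, hx1⟩ := hx
    have hden : (1 : ℝ) - x ≠ 0 := sub_ne_zero.mpr hx1.ne'
    have hnum : HasDerivAt (fun x : ℝ => 1 - x ^ r) (-(r * x ^ (r - 1))) x := by
      simpa using
        (Real.hasDerivAt_rpow_const (p := r) (Or.inl hx0.ne')).const_sub 1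
    have hden' : HasDerivAt (fun x : ℝ => 1 - x) (-1) x := by
      simpa using (hasDerivAt_id x).const_sub 1
    have hd : HasDerivAt (fun x : ℝ => (1 - x ^ r) / (1 - x))
        ((-(r * x ^ (r - 1)) * (1 - x) - (1 - x ^ r) * (-1)) / (1 - x) ^ 2) x :=
      hnum.div hden' hden
    rw [hd.deriv]
    apply div_pos
    · have := bern_aux hx0 hx1 hr
      nlinarith
    · positivity

theorem ratio_strict_anti (a b : ℝ) (ha : 0 < a) (hab : a < b) (hb : b < 1) :
    ∀ t₁ t₂ : ℝ, 0 < t₁ → t₁ < t₂ →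
      (1 - a ^ (t₂ + 1)) / (1 - b ^ t₂) < (1 - a ^ (t₁ + 1)) / (1 - b ^ t₁) := by
  intro t₁ t₂ ht₁ ht
  have ha1 : a < 1 := hab.trans hb
  have hb0 : 0 < b := ha.trans hab
  have ht₂ : 0 < t₂ := ht₁.trans ht
  have hs₁ : (0:ℝ) < t₁ + 1 := by linarith
  have hs₂ : (0:ℝ) < t₂ + 1 := by linarith
  -- basic bounds
  have hA₁ : a ^ (t₁ + 1) < 1 := Real.rpow_lt_one ha.le ha1 hs₁
  have hA₂ : a ^ (t₂ + 1) < 1 := Real.rpow_lt_one ha.le ha1 hs₂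
  have hB₁ : b ^ t₁ < 1 := Real.rpow_lt_one hb0.le hb ht₁
  have hB₂ : b ^ t₂ < 1 := Real.rpow_lt_one hb0.le hb ht₂
  have hB₁' : b ^ (t₁ + 1) < 1 := Real.rpow_lt_one hb0.le hb hs₁
  have hB₂' : b ^ (t₂ + 1) < 1 := Real.rpow_lt_one hb0.le hb hs₂
  have hApos₁ : 0 < a ^ (t₁ + 1) := rpow_pos_of_pos ha _
  have hApos₂ : 0 < a ^ (t₂ + 1) := rpow_pos_of_pos ha _
  have hBpos₁ : 0 < b ^ t₁ := rpow_pos_of_pos hb0 _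
  have hBpos₂ : 0 < b ^ t₂ := rpow_pos_of_pos hb0 _
  set r : ℝ := (t₂ + 1) / (t₁ + 1) with hrdef
  have hr : 1 < r := (one_lt_div hs₁).mpr (by linarith)
  -- Step 1 : (1 - a^{t₂+1})/(1 - a^{t₁+1}) < (1 - b^{t₂+1})/(1 - b^{t₁+1})
  have hAB : a ^ (t₁ + 1) < b ^ (t₁ + 1) := Real.rpow_lt_rpow ha.le hab hs₁
  have hmemA : a ^ (t₁ + 1) ∈ Ioo (0:ℝ) 1 := ⟨hApos₁, hA₁⟩
  have hmemB : b ^ (t₁ + 1) ∈ Ioo (0:ℝ) 1 := ⟨rpow_pos_of_pos hb0 _, hB₁'⟩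
  have hstep1 := psi_strictMono hr hmemA hmemB hAB
  have hexpA : (a ^ (t₁ + 1)) ^ r = a ^ (t₂ + 1) := by
    rw [← Real.rpow_mul ha.le, hrdef]
    congr 1
    field_simp
  have hexpB : (b ^ (t₁ + 1)) ^ r = b ^ (t₂ + 1) := by
    rw [← Real.rpow_mul hb0.le, hrdef]
    congr 1
    field_simp
  simp only [hexpA, hexpB] at hstep1
  -- Step 2 : (1 - b^{t₂+1})/(1 - b^{t₁+1}) < (1 - b^{t₂})/(1 - b^{t₁})
  have hb1₁ : b ^ (t₁ + 1) = b ^ t₁ * b := Real.rpow_add_one hb0.ne' t₁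
  have hb1₂ : b ^ (t₂ + 1) = b ^ t₂ * b := Real.rpow_add_one hb0.ne' t₂
  have hBlt : b ^ t₂ < b ^ t₁ := Real.rpow_lt_rpow_of_exponent_gt hb0 hb ht
  have hstep2 : (1 - b ^ (t₂ + 1)) / (1 - b ^ (t₁ + 1)) < (1 - b ^ t₂) / (1 - b ^ t₁) := by
    rw [hb1₁, hb1₂, div_lt_div_iff₀ (by nlinarith) (by linarith)]
    nlinarith
  have hchain : (1 - a ^ (t₂ + 1)) / (1 - a ^ (t₁ + 1)) < (1 - b ^ t₂) / (1 - b ^ t₁) :=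
    hstep1.trans hstep2
  -- rearrange
  rw [div_lt_div_iff₀ (by linarith) (by linarith)] at hchain
  rw [div_lt_div_iff₀ (by linarith) (by linarith)]
  linarith
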